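/- arXiv:1502.07852 — 6 statements merged into one kernel-verified Lean document; each statement's English description precedes it below -/
import Mathlib

section
/- For every y ∈ ℝ, the cobracket δ_y on su(2,y) satisfies the cocycle identity δ_y([a,b]) = a·δ_y(b) − b·δ_y(a) for all a,b ∈ su(2,y), where x acts on su(2,y) ⊗ su(2,y) by x·(u⊗v) = [x,u]⊗v + u⊗[x,v], and the coJacobi identity: for every a ∈ su(2,y), the sum of (δ_y⊗id)(δ_y(a)) over the three cyclic permutations of the tensor factors of su(2,y)⊗su(2,y)⊗su(2,y) is zero. In other words, (su(2,y), δ_y) is a Lie bialgebra. -/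
open TensorProduct Complex Matrix

noncomputable section

abbrev M2 : Type := Matrix (Fin 2) (Fin 2) ℂ

def J1 : M2 := !![Complex.I, 0; 0, -Complex.I]
def J2 (y : ℝ) : M2 := !![0, 1; -(y : ℂ), 0]
def J3 (y : ℝ) : M2 := !![0, Complex.I; Complex.I * (y : ℂ), 0]

/-- The action of `x` on `M2 ⊗ M2` determined by `x·(u⊗v) = [x,u]⊗v + u⊗[x,v]`. -/
def act (x : M2) : M2 ⊗[ℝ] M2 →ₗ[ℝ] M2 ⊗[ℝ] M2 :=
  LinearMap.rTensor M2 (LinearMap.mulLeft ℝ x - LinearMap.mulRight ℝ x)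
    + LinearMap.lTensor M2 (LinearMap.mulLeft ℝ x - LinearMap.mulRight ℝ x)

/-- The cyclic permutation `a⊗b⊗c ↦ c⊗a⊗b` on `(M2 ⊗ M2) ⊗ M2`. -/
def cyc : (M2 ⊗[ℝ] M2) ⊗[ℝ] M2 →ₗ[ℝ] (M2 ⊗[ℝ] M2) ⊗[ℝ] M2 :=
  (TensorProduct.assoc ℝ M2 M2 M2).symm.toLinearMap ∘ₗ
    (TensorProduct.comm ℝ (M2 ⊗[ℝ] M2) M2).toLinearMap

/- ### Auxiliary lemmas -/

lemma mulLeft_add' (x x' : M2) :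
    LinearMap.mulLeft ℝ (x + x') = LinearMap.mulLeft ℝ x + LinearMap.mulLeft ℝ x' := by
  ext z; simp [add_mul]

lemma mulRight_add' (x x' : M2) :
    LinearMap.mulRight ℝ (x + x') = LinearMap.mulRight ℝ x + LinearMap.mulRight ℝ x' := by
  ext z; simp [mul_add]

lemma mulLeft_smul' (c : ℝ) (x : M2) :
    LinearMap.mulLeft ℝ (c • x) = c • LinearMap.mulLeft ℝ x := by
  ext z; simp [smul_mul_assoc]

lemma mulRight_smul' (c : ℝ) (x : M2) :
    LinearMap.mulRight ℝ (c • x) = c • LinearMap.mulRight ℝ x := by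
  ext z; simp [mul_smul_comm]

lemma act_tmul (x u v : M2) :
    act x (u ⊗ₜ[ℝ] v) = (x * u - u * x) ⊗ₜ[ℝ] v + u ⊗ₜ[ℝ] (x * v - v * x) := by
  simp only [act, LinearMap.add_apply, LinearMap.rTensor_tmul, LinearMap.lTensor_tmul,
    LinearMap.sub_apply, LinearMap.mulLeft_apply, LinearMap.mulRight_apply]

lemma act_add (x x' : M2) : act (x + x') = act x + act x' := by
  simp only [act, mulLeft_add', mulRight_add']
  rw [show (LinearMap.mulLeft ℝ x + LinearMap.mulLeft ℝ x')
      - (LinearMap.mulRight ℝ x + LinearMap.mulRight ℝ x')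
      = (LinearMap.mulLeft ℝ x - LinearMap.mulRight ℝ x)
        + (LinearMap.mulLeft ℝ x' - LinearMap.mulRight ℝ x') from by abel,
    LinearMap.rTensor_add, LinearMap.lTensor_add]
  abel

lemma act_smul (c : ℝ) (x : M2) : act (c • x) = c • act x := by
  apply TensorProduct.ext'
  intro u v
  simp only [LinearMap.smul_apply, act_tmul, smul_mul_assoc, mul_smul_comm, ← smul_sub,
    smul_tmul', smul_add, tmul_smul]

lemma cyc_tmul (a b c : M2) :
    cyc ((a ⊗ₜ[ℝ] b) ⊗ₜ[ℝ] c) = (c ⊗ₜ[ℝ] a) ⊗ₜ[ℝ] b := by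
  simp [cyc]

/-- The bilinear map encoding the cocycle identity. -/
def Gmap (δ : M2 →ₗ[ℝ] M2 ⊗[ℝ] M2) : M2 →ₗ[ℝ] M2 →ₗ[ℝ] M2 ⊗[ℝ] M2 :=
  LinearMap.mk₂ ℝ (fun a b => δ (a * b - b * a) - (act a (δ b) - act b (δ a)))
    (fun m₁ m₂ n => by
      rw [show (m₁ + m₂) * n - n * (m₁ + m₂)
          = (m₁ * n - n * m₁) + (m₂ * n - n * m₂) from by noncomm_ring,
        map_add, act_add]
      simp only [LinearMap.add_apply, map_add]
      abel)
    (fun c m n => by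
      rw [show (c • m) * n - n * (c • m) = c • (m * n - n * m) from by
          rw [smul_mul_assoc, mul_smul_comm, smul_sub],
        _root_.map_smul, act_smul]
      simp only [LinearMap.smul_apply, _root_.map_smul]
      rw [smul_sub, smul_sub])
    (fun m n₁ n₂ => by
      rw [show m * (n₁ + n₂) - (n₁ + n₂) * m
          = (m * n₁ - n₁ * m) + (m * n₂ - n₂ * m) from by noncomm_ring,
        map_add, map_add, act_add]
      simp only [LinearMap.add_apply, map_add]
      abel)
    (fun c m n => by
      rw [show m * (c • n) - (c • n) * m = c • (m * n - n * m) from by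
          rw [smul_mul_assoc, mul_smul_comm, smul_sub],
        _root_.map_smul, _root_.map_smul, act_smul]
      simp only [LinearMap.smul_apply, _root_.map_smul]
      rw [smul_sub, smul_sub])

lemma Gmap_apply (δ : M2 →ₗ[ℝ] M2 ⊗[ℝ] M2) (a b : M2) :
    Gmap δ a b = δ (a * b - b * a) - (act a (δ b) - act b (δ a)) := rfl

/-- The linear map encoding the coJacobi identity. -/
def Lmap (δ : M2 →ₗ[ℝ] M2 ⊗[ℝ] M2) : M2 →ₗ[ℝ] (M2 ⊗[ℝ] M2) ⊗[ℝ] M2 :=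
  (LinearMap.id + cyc + cyc ∘ₗ cyc) ∘ₗ (LinearMap.rTensor M2 δ) ∘ₗ δ

lemma Lmap_apply (δ : M2 →ₗ[ℝ] M2 ⊗[ℝ] M2) (a : M2) :
    Lmap δ a = (LinearMap.rTensor M2 δ) (δ a) + cyc ((LinearMap.rTensor M2 δ) (δ a))
      + cyc (cyc ((LinearMap.rTensor M2 δ) (δ a))) := rfl

/- ### Bracket relations -/

lemma b12 (y : ℝ) : J1 * J2 y - J2 y * J1 = (2 : ℝ) • J3 y := by
  ext i j
  fin_cases i <;> fin_cases j <;>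
    simp [J1, J2, J3, Matrix.mul_fin_two, Complex.ext_iff] <;> ring

lemma b23 (y : ℝ) : J2 y * J3 y - J3 y * J2 y = (2 * y : ℝ) • J1 := by
  ext i j
  fin_cases i <;> fin_cases j <;>
    simp [J1, J2, J3, Matrix.mul_fin_two, Complex.ext_iff] <;> ring

lemma b31 (y : ℝ) : J3 y * J1 - J1 * J3 y = (2 : ℝ) • J2 y := by
  ext i j
  fin_cases i <;> fin_cases j <;>
    simp [J1, J2, J3, Matrix.mul_fin_two, Complex.ext_iff] <;> ring

lemma e21 (y : ℝ) : J2 y * J1 - J1 * J2 y = -((2 : ℝ) • J3 y) := by rw [← b12]; abel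
lemma e32 (y : ℝ) : J3 y * J2 y - J2 y * J3 y = -((2 * y : ℝ) • J1) := by rw [← b23]; abel
lemma e13 (y : ℝ) : J1 * J3 y - J3 y * J1 = -((2 : ℝ) • J2 y) := by rw [← b31]; abel

set_option maxHeartbeats 1000000 in
set_option synthInstance.maxHeartbeats 400000 in
/-- the cobracket `δ_y` on `su(2,y)` satisfies the cocycle identity and the
coJacobi identity, i.e. `(su(2,y), δ_y)` is a Lie bialgebra. -/
theorem statement0 (y : ℝ) (δ : M2 →ₗ[ℝ] M2 ⊗[ℝ] M2)
    (h1 : δ J1 = 0)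
    (h2 : δ (J2 y) = J1 ⊗ₜ[ℝ] J2 y - J2 y ⊗ₜ[ℝ] J1)
    (h3 : δ (J3 y) = J1 ⊗ₜ[ℝ] J3 y - J3 y ⊗ₜ[ℝ] J1) :
    (∀ a ∈ Submodule.span ℝ {J1, J2 y, J3 y}, ∀ b ∈ Submodule.span ℝ {J1, J2 y, J3 y},
      δ (a * b - b * a) = act a (δ b) - act b (δ a)) ∧
    (∀ a ∈ Submodule.span ℝ {J1, J2 y, J3 y},
      (LinearMap.rTensor M2 δ) (δ a) + cyc ((LinearMap.rTensor M2 δ) (δ a))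
        + cyc (cyc ((LinearMap.rTensor M2 δ) (δ a))) = 0) := by
  -- The nine generator cases of the cocycle identity.
  have key : ∀ g ∈ ({J1, J2 y, J3 y} : Set M2), ∀ g' ∈ ({J1, J2 y, J3 y} : Set M2),
      Gmap δ g g' = 0 := by
    rintro g (rfl | rfl | rfl) g' (rfl | rfl | rfl) <;>
      rw [Gmap_apply] <;>
      simp only [sub_self, map_zero, b12 y, b23 y, b31 y, e21 y, e32 y, e13 y,
        _root_.map_smul, map_neg, map_sub, h1, h2, h3, act_tmul] <;>
      simp only [b12 y, b23 y, b31 y, e21 y, e32 y, e13 y, sub_self,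
        zero_tmul, tmul_zero, smul_tmul, tmul_smul, neg_tmul, tmul_neg,
        smul_sub, smul_neg, smul_zero, neg_zero, add_zero, zero_add, sub_zero, zero_sub] <;>
      abel
  constructor
  · intro a ha b hb
    have hb' : ∀ g ∈ ({J1, J2 y, J3 y} : Set M2), Gmap δ g b = 0 := by
      intro g hg
      have hsub : Submodule.span ℝ {J1, J2 y, J3 y} ≤ LinearMap.ker (Gmap δ g) := by
        rw [Submodule.span_le]
        intro x hx
        exact LinearMap.mem_ker.mpr (key g hg x hx)
      exact hsub hb
    have hsub : Submodule.span ℝ {J1, J2 y, J3 y} ≤ LinearMap.ker ((Gmap δ).flip b) := by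
      rw [Submodule.span_le]
      intro x hx
      exact LinearMap.mem_ker.mpr (hb' x hx)
    have h0 : Gmap δ a b = 0 := hsub ha
    rw [Gmap_apply] at h0
    exact sub_eq_zero.mp h0
  · intro a ha
    rw [← Lmap_apply]
    have hsub : Submodule.span ℝ {J1, J2 y, J3 y} ≤ LinearMap.ker (Lmap δ) := by
      rw [Submodule.span_le]
      rintro x (rfl | rfl | rfl) <;>
        refine LinearMap.mem_ker.mpr ?_ <;>
        rw [Lmap_apply] <;>
        simp only [h1, h2, h3, map_zero, map_sub, LinearMap.rTensor_tmul,
          zero_tmul, tmul_zero, sub_tmul, tmul_sub, cyc_tmul, zero_sub,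
          map_neg, sub_zero, add_zero, zero_add, neg_zero] <;>
        abel
    exact hsub ha
end
end

section
/- For every y ∈ ℝ, the real-linear map su(2,y)* → M₂(ℂ) sending Ĵ1 ↦ (1/2)!![-1,0;0,1], Ĵ2 ↦ (1/2)!![0,0;i,0], Ĵ3 ↦ (1/2)!![0,0;1,0] is an injective homomorphism of real Lie algebras (with su(2,y)* carrying the dual bracket and M₂(ℂ) the commutator bracket), whose image is exactly the set 𝔟 of lower-triangular complex 2×2 matrices with zero trace and real diagonal entries. In particular su(2,y)* is isomorphic as a real Lie algebra to 𝔟. -/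
open TensorProduct Complex Matrix

set_option synthInstance.maxHeartbeats 1000000
set_option maxHeartbeats 1000000

noncomputable section

/-- `su(2,y)`, the real span of `J1, J2(y), J3(y)` in `M₂(ℂ)`. -/
def V (y : ℝ) : Submodule ℝ M2 := Submodule.span ℝ {J1, J2 y, J3 y}

/-- the real-linear map `su(2,y)* → M₂(ℂ)` sending the dual basis to the
indicated matrices is an injective Lie algebra homomorphism (dual bracket on the source,
commutator on the target) with image the lower-triangular trace-zero matrices with real
diagonal. -/
theorem statement2 (y : ℝ)
    (b : Module.Basis (Fin 3) ℝ (V y))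
    (hb1 : (b 0 : M2) = J1) (hb2 : (b 1 : M2) = J2 y) (hb3 : (b 2 : M2) = J3 y)
    (δ : V y →ₗ[ℝ] (V y) ⊗[ℝ] (V y))
    (hδ1 : δ (b 0) = 0)
    (hδ2 : δ (b 1) = b 0 ⊗ₜ[ℝ] b 1 - b 1 ⊗ₜ[ℝ] b 0)
    (hδ3 : δ (b 2) = b 0 ⊗ₜ[ℝ] b 2 - b 2 ⊗ₜ[ℝ] b 0)
    (Φ : Module.Dual ℝ (V y) →ₗ[ℝ] M2)
    (hΦ1 : Φ (b.dualBasis 0) = !![-(1/2 : ℂ), 0; 0, (1/2 : ℂ)])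
    (hΦ2 : Φ (b.dualBasis 1) = !![0, 0; Complex.I / 2, 0])
    (hΦ3 : Φ (b.dualBasis 2) = !![0, 0; (1/2 : ℂ), 0]) :
    Function.Injective Φ ∧
    (∀ ω θ : Module.Dual ℝ (V y),
      Φ ((TensorProduct.lid ℝ ℝ).toLinearMap ∘ₗ TensorProduct.map ω θ ∘ₗ δ)
        = Φ ω * Φ θ - Φ θ * Φ ω) ∧
    Set.range Φ = {m : M2 | m 0 1 = 0 ∧ m 0 0 + m 1 1 = 0 ∧
      (m 0 0).im = 0 ∧ (m 1 1).im = 0} := by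
  have key : ∀ f : Module.Dual ℝ (V y), Φ f =
      !![-(f (b 0) : ℂ)/2, 0;
         (f (b 1) : ℂ) * Complex.I/2 + (f (b 2) : ℂ)/2, (f (b 0) : ℂ)/2] := by
    intro f
    conv_lhs => rw [← b.dualBasis.sum_repr f]
    rw [Fin.sum_univ_three, map_add, map_add, _root_.map_smul, _root_.map_smul,
      _root_.map_smul, Module.Basis.dualBasis_repr, Module.Basis.dualBasis_repr,
      Module.Basis.dualBasis_repr, hΦ1, hΦ2, hΦ3]
    ext i j
    fin_cases i <;> fin_cases j <;>
      simp [Matrix.add_apply, Matrix.smul_apply, Complex.real_smul] <;> ring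
  refine ⟨?_, ?_, ?_⟩
  · rw [injective_iff_map_eq_zero]
    intro f hf
    rw [key f] at hf
    have h00 := congrFun (congrFun hf 0) 0
    have h10 := congrFun (congrFun hf 1) 0
    simp at h00 h10
    have ha : f (b 0) = 0 := by
      exact_mod_cast h00
    have hre := congrArg Complex.re h10
    have him := congrArg Complex.im h10
    simp [Complex.add_im, Complex.add_re, Complex.mul_re, Complex.mul_im,
      Complex.div_re, Complex.div_im, Complex.I_re, Complex.I_im] at hre him
    refine b.ext fun i => ?_
    fin_cases i <;> simp [ha, hre, him]
  · intro ω θ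
    set L : Module.Dual ℝ (V y) :=
      (TensorProduct.lid ℝ ℝ).toLinearMap ∘ₗ TensorProduct.map ω θ ∘ₗ δ with hL
    have hL0 : L (b 0) = 0 := by
      rw [hL, LinearMap.comp_apply, LinearMap.comp_apply, hδ1, map_zero, map_zero]
    have hL1 : L (b 1) = ω (b 0) * θ (b 1) - ω (b 1) * θ (b 0) := by
      rw [hL, LinearMap.comp_apply, LinearMap.comp_apply, hδ2, map_sub,
        TensorProduct.map_tmul, TensorProduct.map_tmul, map_sub]
      simp [TensorProduct.lid_tmul, smul_eq_mul, mul_comm]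
    have hL2 : L (b 2) = ω (b 0) * θ (b 2) - ω (b 2) * θ (b 0) := by
      rw [hL, LinearMap.comp_apply, LinearMap.comp_apply, hδ3, map_sub,
        TensorProduct.map_tmul, TensorProduct.map_tmul, map_sub]
      simp [TensorProduct.lid_tmul, smul_eq_mul, mul_comm]
    rw [key L, key ω, key θ, hL0, hL1, hL2]
    ext i j
    fin_cases i <;> fin_cases j <;>
      simp [Matrix.mul_apply, Fin.sum_univ_two] <;> push_cast <;> ring
  · ext m
    constructor
    · rintro ⟨f, rfl⟩
      rw [key f]
      refine ⟨?_, ?_, ?_, ?_⟩ <;> simp <;> ring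
    · rintro ⟨h01, htr, him0, him1⟩
      refine ⟨(-2 * (m 0 0).re) • b.dualBasis 0 + (2 * (m 1 0).im) • b.dualBasis 1
        + (2 * (m 1 0).re) • b.dualBasis 2, ?_⟩
      have hm00 : m 0 0 = ((m 0 0).re : ℂ) := by
        rw [← Complex.re_add_im (m 0 0), him0]; simp
      have hm11 : m 1 1 = -((m 0 0).re : ℂ) := by
        rw [← hm00]; linear_combination htr
      have hm10 : m 1 0 = ((m 1 0).re : ℂ) + ((m 1 0).im : ℂ) * Complex.I :=
        (Complex.re_add_im (m 1 0)).symm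
      simp only [map_add, _root_.map_smul, hΦ1, hΦ2, hΦ3]
      ext i j
      fin_cases i <;> fin_cases j <;>
        simp <;>
        first
        | linear_combination -hm00
        | exact h01.symm
        | linear_combination -hm10
        | linear_combination -hm11
end
end

section
/- For y > 0, conjugation m ↦ d m d⁻¹ by d = diag(y^{1/4}, y^{−1/4}) restricts to an isomorphism of real Lie algebras from su(2,y) onto su(2) = {m ∈ M₂(ℂ) : mᴴ = −m and tr(m) = 0}. For y < 0, conjugation by d = diag(|y|^{1/4}, |y|^{−1/4}) restricts to an isomorphism of real Lie algebras from su(2,y) onto su(1,1) = {m ∈ M₂(ℂ) : mᴴη + ηm = 0 and tr(m) = 0}, where η = diag(1,−1). -/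
open Complex Matrix

noncomputable section

/-- `su(2) = {m : mᴴ = −m, tr m = 0}`. -/
def su2Set : Set M2 := {m | m.conjTranspose = -m ∧ m.trace = 0}

/-- `su(1,1) = {m : mᴴη + ηm = 0, tr m = 0}` with `η = diag(1,−1)`. -/
def su11Set : Set M2 :=
  {m | m.conjTranspose * !![1, 0; 0, -1] + !![1, 0; 0, -1] * m = 0 ∧ m.trace = 0}

lemma mem_V (y : ℝ) (m : M2) :
    m ∈ V y ↔ ∃ a b c : ℝ, m = a • J1 + b • J2 y + c • J3 y := by
  constructor
  · intro hm
    rw [V, Submodule.mem_span_insert] at hm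
    obtain ⟨a, z, hz, rfl⟩ := hm
    rw [Submodule.mem_span_insert] at hz
    obtain ⟨b, w, hw, rfl⟩ := hz
    rw [Submodule.mem_span_singleton] at hw
    obtain ⟨c, rfl⟩ := hw
    exact ⟨a, b, c, by abel⟩
  · rintro ⟨a, b, c, rfl⟩
    refine Submodule.add_mem _ (Submodule.add_mem _ ?_ ?_) ?_ <;>
      apply Submodule.smul_mem <;> apply Submodule.subset_span <;> simp

lemma key (y a ε : ℝ) (hε : ε * ε = 1) (ha : 0 < a) (h4 : a ^ 4 = ε * y)
    (d : M2) (hd : d = !![((a : ℝ) : ℂ), 0; 0, (((a⁻¹ : ℝ)) : ℂ)]) :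
    (∀ (r : ℝ) (m n : M2), d * (r • m + n) * d⁻¹ = r • (d * m * d⁻¹) + d * n * d⁻¹) ∧
    Set.BijOn (fun m => d * m * d⁻¹) (V y : Set M2)
      {m : M2 | m 1 1 = -m 0 0 ∧ (starRingEnd ℂ) (m 0 0) = -m 0 0 ∧
        m 1 0 = -(ε : ℂ) * (starRingEnd ℂ) (m 0 1)} ∧
    (∀ m ∈ (V y : Set M2), ∀ n ∈ (V y : Set M2),
      d * (m * n - n * m) * d⁻¹
        = (d * m * d⁻¹) * (d * n * d⁻¹) - (d * n * d⁻¹) * (d * m * d⁻¹)) := by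
  have hA : ((a : ℂ)) ≠ 0 := by exact_mod_cast ha.ne'
  set e : M2 := !![((a : ℂ))⁻¹, 0; 0, ((a : ℂ))] with he
  have hde : d * e = 1 := by
    subst hd
    ext i j
    fin_cases i <;> fin_cases j <;>
      simp [he, Matrix.mul_apply, Fin.sum_univ_two, mul_inv_cancel₀ hA, inv_mul_cancel₀ hA]
  have hed : e * d = 1 := by
    subst hd
    ext i j
    fin_cases i <;> fin_cases j <;>
      simp [he, Matrix.mul_apply, Fin.sum_univ_two, mul_inv_cancel₀ hA, inv_mul_cancel₀ hA]
  have hinv : d⁻¹ = e := Matrix.inv_eq_right_inv hde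
  have hmul : ∀ p q : M2, (d * p * e) * (d * q * e) = d * (p * q) * e := by
    intro p q
    calc (d * p * e) * (d * q * e) = d * p * ((e * d) * (q * e)) := by
          simp only [mul_assoc]
      _ = d * (p * q) * e := by rw [hed, one_mul]; simp only [mul_assoc]
  have h4C : ((a : ℂ)) ^ 4 = (ε : ℂ) * (y : ℂ) := by exact_mod_cast congrArg (Complex.ofReal) h4
  have hεC : (ε : ℂ) * (ε : ℂ) = 1 := by exact_mod_cast congrArg (Complex.ofReal) hε
  refine ⟨?_, ⟨?_, ?_, ?_⟩, ?_⟩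
  · intro r m n
    simp [Matrix.add_mul, Matrix.mul_add, Matrix.smul_mul, Matrix.mul_smul]
  · -- MapsTo
    intro m hm
    rw [SetLike.mem_coe, mem_V] at hm
    obtain ⟨α, β, γ, rfl⟩ := hm
    rw [Set.mem_setOf_eq]
    simp only [hinv]
    subst hd
    refine ⟨?_, ?_, ?_⟩ <;>
      simp [he, J1, J2, J3, Matrix.mul_apply, Fin.sum_univ_two, _root_.map_mul, _root_.map_add,
        Complex.conj_I, Complex.conj_ofReal, map_neg] <;>
      field_simp <;>
      linear_combination ((ε:ℂ) * ((β:ℂ) - (γ:ℂ) * I)) * h4C + ((y:ℂ) * ((β:ℂ) - (γ:ℂ) * I)) * hεC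
  · -- InjOn
    intro m _ n _ h
    simp only [hinv] at h
    have : e * (d * m * e) * d = e * (d * n * e) * d := by rw [h]
    calc m = (e * d) * m * (e * d) := by rw [hed, one_mul, mul_one]
      _ = e * (d * m * e) * d := by simp only [mul_assoc]
      _ = e * (d * n * e) * d := this
      _ = (e * d) * n * (e * d) := by simp only [mul_assoc]
      _ = n := by rw [hed, one_mul, mul_one]
  · -- SurjOn
    intro n hn
    obtain ⟨h11, h00, h10⟩ := hn
    refine ⟨e * n * d, ?_, ?_⟩
    · rw [SetLike.mem_coe, mem_V]
      have hre : (n 0 0).re = 0 := by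
        have := congrArg Complex.re h00
        simp at this
        linarith
      obtain ⟨t, h00'⟩ : ∃ t : ℝ, n 0 0 = (t : ℂ) * I := by
        refine ⟨(n 0 0).im, ?_⟩
        conv_lhs => rw [← Complex.re_add_im (n 0 0)]
        rw [hre]
        push_cast
        ring
      obtain ⟨u, v, h01'⟩ : ∃ u v : ℝ, n 0 1 = (u : ℂ) + (v : ℂ) * I :=
        ⟨(n 0 1).re, (n 0 1).im, (Complex.re_add_im (n 0 1)).symm⟩
      have h10' : n 1 0 = -(ε : ℂ) * ((u : ℂ) - (v : ℂ) * I) := by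
        rw [h10, h01']
        rw [_root_.map_add, _root_.map_mul, Complex.conj_ofReal, Complex.conj_ofReal,
          Complex.conj_I]
        ring
      have h11' : n 1 1 = -((t : ℂ) * I) := by rw [h11, h00']
      refine ⟨t, u / a ^ 2, v / a ^ 2, ?_⟩
      subst hd
      ext i j
      fin_cases i <;> fin_cases j <;>
        simp [he, J1, J2, J3, Matrix.mul_apply, Matrix.vecMul, dotProduct,
          Fin.sum_univ_two, h00', h01', h10', h11']
      · field_simp
      · field_simp
      · field_simp
        linear_combination (-(ε:ℂ) * ((u:ℂ) - (v:ℂ) * I)) * h4C +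
          (-(y:ℂ) * ((u:ℂ) - (v:ℂ) * I)) * hεC
      · field_simp
    · show d * (e * n * d) * d⁻¹ = n
      rw [hinv]
      calc d * (e * n * d) * e = (d * e) * n * (d * e) := by simp only [mul_assoc]
        _ = n := by rw [hde, one_mul, mul_one]
  · intro m _ n _
    rw [hinv, hmul, hmul, ← sub_mul, ← mul_sub]

lemma su2_eq : su2Set = {m : M2 | m 1 1 = -m 0 0 ∧
    (starRingEnd ℂ) (m 0 0) = -m 0 0 ∧ m 1 0 = -(((1:ℝ)):ℂ) * (starRingEnd ℂ) (m 0 1)} := by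
  ext m
  simp only [su2Set, Set.mem_setOf_eq, Matrix.trace_fin_two]
  constructor
  · rintro ⟨hc, ht⟩
    have h00 : m.conjTranspose 0 0 = (-m) 0 0 := by rw [hc]
    have h10 : m.conjTranspose 1 0 = (-m) 1 0 := by rw [hc]
    simp only [Matrix.conjTranspose_apply, Matrix.neg_apply, Complex.star_def] at h00 h10
    push_cast
    exact ⟨by linear_combination ht, h00, by linear_combination h10⟩
  · rintro ⟨h1, h2, h3⟩
    push_cast at h3
    have h3' : (starRingEnd ℂ) (m 1 0) = -m 0 1 := by
      rw [h3]; simp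
    have h11' : (starRingEnd ℂ) (m 1 1) = -m 1 1 := by
      rw [h1, map_neg, h2]
    refine ⟨Matrix.ext ?_, by linear_combination h1⟩
    simp only [Fin.forall_fin_two, Matrix.conjTranspose_apply, Matrix.neg_apply,
      Complex.star_def]
    exact ⟨⟨h2, h3'⟩, by linear_combination h3, h11'⟩

lemma su11_eq : su11Set = {m : M2 | m 1 1 = -m 0 0 ∧
    (starRingEnd ℂ) (m 0 0) = -m 0 0 ∧ m 1 0 = -(((-1:ℝ)):ℂ) * (starRingEnd ℂ) (m 0 1)} := by
  ext m
  simp only [su11Set, Set.mem_setOf_eq, Matrix.trace_fin_two]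
  constructor
  · rintro ⟨hc, ht⟩
    have h00 := Matrix.ext_iff.2 hc 0 0
    have h01 := Matrix.ext_iff.2 hc 0 1
    simp [Matrix.mul_apply, Matrix.add_apply, Fin.sum_univ_two, Matrix.conjTranspose_apply,
      Complex.star_def, Matrix.vecMul, dotProduct] at h00 h01
    push_cast
    refine ⟨by linear_combination ht, by linear_combination h00, ?_⟩
    have h01' := congrArg (starRingEnd ℂ) h01
    simp only [map_sub, map_neg, _root_.map_mul, Complex.conj_conj, map_add, map_zero] at h01'
    linear_combination -h01'
  · rintro ⟨h1, h2, h3⟩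
    push_cast at h3
    have h3' : (starRingEnd ℂ) (m 1 0) = m 0 1 := by
      rw [h3]; simp
    have h11' : (starRingEnd ℂ) (m 1 1) = -m 1 1 := by
      rw [h1, map_neg, h2]
    refine ⟨Matrix.ext ?_, by linear_combination h1⟩
    simp only [Fin.forall_fin_two]
    refine ⟨⟨?_, ?_⟩, ?_, ?_⟩ <;>
      simp [Matrix.mul_apply, Matrix.add_apply, Fin.sum_univ_two, Matrix.conjTranspose_apply,
        Complex.star_def, Matrix.vecMul, dotProduct]
    · linear_combination h2
    · linear_combination -h3'
    · linear_combination -h3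
    · linear_combination -h11'

/-- for `y > 0` conjugation by `diag(y^{1/4}, y^{−1/4})` is a real Lie algebra
isomorphism from `su(2,y)` onto `su(2)`; for `y < 0` conjugation by
`diag(|y|^{1/4}, |y|^{−1/4})` is a real Lie algebra isomorphism from `su(2,y)` onto
`su(1,1)`. -/
theorem statement4 (y : ℝ) :
    (0 < y →
      ∀ d : M2, d = !![((y ^ ((1:ℝ)/4) : ℝ) : ℂ), 0; 0, (((y ^ ((1:ℝ)/4))⁻¹ : ℝ) : ℂ)] →
        (∀ (r : ℝ) (m n : M2), d * (r • m + n) * d⁻¹ = r • (d * m * d⁻¹) + d * n * d⁻¹) ∧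
        Set.BijOn (fun m => d * m * d⁻¹) (V y : Set M2) su2Set ∧
        (∀ m ∈ (V y : Set M2), ∀ n ∈ (V y : Set M2),
          d * (m * n - n * m) * d⁻¹
            = (d * m * d⁻¹) * (d * n * d⁻¹) - (d * n * d⁻¹) * (d * m * d⁻¹))) ∧
    (y < 0 →
      ∀ d : M2, d = !![((|y| ^ ((1:ℝ)/4) : ℝ) : ℂ), 0; 0, (((|y| ^ ((1:ℝ)/4))⁻¹ : ℝ) : ℂ)] →
        (∀ (r : ℝ) (m n : M2), d * (r • m + n) * d⁻¹ = r • (d * m * d⁻¹) + d * n * d⁻¹) ∧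
        Set.BijOn (fun m => d * m * d⁻¹) (V y : Set M2) su11Set ∧
        (∀ m ∈ (V y : Set M2), ∀ n ∈ (V y : Set M2),
          d * (m * n - n * m) * d⁻¹
            = (d * m * d⁻¹) * (d * n * d⁻¹) - (d * n * d⁻¹) * (d * m * d⁻¹))) := by
  constructor
  · intro hy d hd
    have ha : (0:ℝ) < y ^ ((1:ℝ)/4) := Real.rpow_pos_of_pos hy _
    have h4 : (y ^ ((1:ℝ)/4)) ^ 4 = 1 * y := by
      rw [one_mul, ← Real.rpow_natCast (y ^ ((1:ℝ)/4)) 4, ← Real.rpow_mul hy.le]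
      norm_num
    have hk := key y (y ^ ((1:ℝ)/4)) 1 (by norm_num) ha h4 d hd
    rw [su2_eq]
    exact hk
  · intro hy d hd
    have hy' : (0:ℝ) < |y| := abs_pos.2 hy.ne
    have ha : (0:ℝ) < |y| ^ ((1:ℝ)/4) := Real.rpow_pos_of_pos hy' _
    have h4 : (|y| ^ ((1:ℝ)/4)) ^ 4 = (-1) * y := by
      rw [← Real.rpow_natCast (|y| ^ ((1:ℝ)/4)) 4, ← Real.rpow_mul (abs_nonneg y)]
      rw [abs_of_neg hy]
      norm_num
    have hk := key y (|y| ^ ((1:ℝ)/4)) (-1) (by norm_num) ha h4 d hd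
    rw [su11_eq]
    exact hk
end
end

section
/- For every y ≠ 0, the real-linear map from su_ext(y) to the product Lie algebra su(2,y) × ℝ (with ℝ abelian) determined by J0 ↦ (0, 1), J1 ↦ (J1, −1/y), J2 ↦ (J2(y), 0), J3 ↦ (J3(y), 0) is an isomorphism of real Lie algebras. -/
open Complex Matrix

noncomputable section

/-- The underlying 4-dimensional real vector space of `su_ext(y)`. -/
abbrev V4 : Type := Fin 4 → ℝ

/-- The standard basis `(J0, J1, J2, J3)` of `su_ext(y)`. -/
def e (i : Fin 4) : V4 := Pi.single i 1

lemma comm12 (y : ℝ) : J1 * J2 y - J2 y * J1 = (2:ℝ) • J3 y := by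
  ext i j; fin_cases i <;> fin_cases j <;>
    simp [J1, J2, J3, Matrix.mul_apply, Fin.sum_univ_two, Complex.real_smul] <;> ring

lemma comm23 (y : ℝ) : J2 y * J3 y - J3 y * J2 y = (2*y:ℝ) • J1 := by
  ext i j; fin_cases i <;> fin_cases j <;>
    simp [J1, J2, J3, Matrix.mul_apply, Fin.sum_univ_two, Complex.real_smul] <;> ring

lemma comm31 (y : ℝ) : J3 y * J1 - J1 * J3 y = (2:ℝ) • J2 y := by
  ext i j; fin_cases i <;> fin_cases j <;>
    simp [J1, J2, J3, Matrix.mul_apply, Fin.sum_univ_two, Complex.real_smul] <;>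
    ring_nf <;> simp [Complex.I_sq]

lemma hrep (v : V4) : v = v 0 • e 0 + v 1 • e 1 + v 2 • e 2 + v 3 • e 3 := by
  funext j; fin_cases j <;> simp [e, Pi.single_apply]

lemma hbe (k : Fin 4) : (Pi.basisFun ℝ (Fin 4)) k = e k := by
  simp [e, Pi.basisFun_apply]

/-- for `y ≠ 0` the real-linear map `su_ext(y) → su(2,y) × ℝ` determined by
`J0 ↦ (0,1)`, `J1 ↦ (J1, −1/y)`, `J2 ↦ (J2(y), 0)`, `J3 ↦ (J3(y), 0)` is an isomorphism of
real Lie algebras, where `su(2,y) × ℝ` carries the bracket `[(m,s),(n,t)] = ([m,n],0)`. -/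
theorem statement7 (y : ℝ) (hy : y ≠ 0)
    (B : V4 →ₗ[ℝ] V4 →ₗ[ℝ] V4)
    (hskew : ∀ u v : V4, B u v = - B v u)
    (h12 : B (e 1) (e 2) = (2 : ℝ) • e 3)
    (h23 : B (e 2) (e 3) = (2 * y) • e 1 + (2 : ℝ) • e 0)
    (h31 : B (e 3) (e 1) = (2 : ℝ) • e 2)
    (h0 : ∀ i : Fin 4, B (e 0) (e i) = 0)
    (f : V4 →ₗ[ℝ] M2 × ℝ)
    (hf0 : f (e 0) = (0, 1))
    (hf1 : f (e 1) = (J1, -1/y))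
    (hf2 : f (e 2) = (J2 y, 0))
    (hf3 : f (e 3) = (J3 y, 0)) :
    Function.Injective f ∧
    Set.range f = {p : M2 × ℝ | p.1 ∈ Submodule.span ℝ {J1, J2 y, J3 y}} ∧
    (∀ u v : V4, f (B u v) = ((f u).1 * (f v).1 - (f v).1 * (f u).1, 0)) := by
  have hfv : ∀ v : V4, f v = (v 1 • J1 + v 2 • J2 y + v 3 • J3 y, v 0 - v 1 / y) := by
    intro v
    conv_lhs => rw [hrep v]
    simp only [map_add, _root_.map_smul, hf0, hf1, hf2, hf3, Prod.smul_mk, Prod.mk_add_mk,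
      smul_zero, smul_eq_mul, Prod.mk.injEq]
    constructor
    · abel
    · ring
  refine ⟨?_, ?_, ?_⟩
  · -- injectivity
    rw [injective_iff_map_eq_zero]
    intro v hv
    rw [hfv v, Prod.ext_iff] at hv
    obtain ⟨hM, hs⟩ := hv
    simp only at hM hs
    have h1 : v 1 = 0 := by
      have := congrFun (congrFun hM 0) 0
      simpa [J1, J2, J3, Complex.real_smul, Complex.ext_iff] using this
    have h23' : v 2 = 0 ∧ v 3 = 0 := by
      have := congrFun (congrFun hM 0) 1
      simpa [J1, J2, J3, Complex.real_smul, Complex.ext_iff] using this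
    have h0' : v 0 = 0 := by rw [h1] at hs; simpa using hs
    funext j; fin_cases j <;> simp [h1, h23'.1, h23'.2, h0']
  · -- range
    ext p
    simp only [Set.mem_range, Set.mem_setOf_eq]
    constructor
    · rintro ⟨v, rfl⟩
      rw [hfv v]
      exact Submodule.add_mem _ (Submodule.add_mem _
        (Submodule.smul_mem _ _ (Submodule.subset_span (by simp)))
        (Submodule.smul_mem _ _ (Submodule.subset_span (by simp))))
        (Submodule.smul_mem _ _ (Submodule.subset_span (by simp)))
    · intro hp
      obtain ⟨a, z, hz, hp1⟩ := Submodule.mem_span_insert.mp hp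
      obtain ⟨b, w, hw, hz1⟩ := Submodule.mem_span_insert.mp hz
      obtain ⟨c, hw1⟩ := Submodule.mem_span_singleton.mp hw
      refine ⟨![p.2 + a/y, a, b, c], ?_⟩
      rw [hfv]
      simp only [Matrix.cons_val_one, Matrix.head_cons, Matrix.cons_val_zero,
        Matrix.cons_val_two, Matrix.tail_cons, Matrix.cons_val_three]
      rw [Prod.ext_iff]
      constructor
      · simp only []
        rw [hp1, hz1, ← hw1]
        abel
      · simp only []
        field_simp
        ring
  · -- bracket
    have hBuu : ∀ u : V4, B u u = 0 := by
      intro u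
      have h := hskew u u
      have h2 : (2:ℝ) • B u u = 0 := by rw [two_smul]; nth_rewrite 1 [h]; simp
      simpa using (smul_eq_zero.mp h2).resolve_left (by norm_num)
    have kd : ∀ i : Fin 4, f (B (e i) (e i)) =
        ((f (e i)).1 * (f (e i)).1 - (f (e i)).1 * (f (e i)).1, 0) := by
      intro i; rw [hBuu]; simp; rfl
    have k0 : ∀ j : Fin 4, f (B (e 0) (e j)) =
        ((f (e 0)).1 * (f (e j)).1 - (f (e j)).1 * (f (e 0)).1, 0) := by
      intro j; rw [h0]; simp [hf0]; rfl
    have k0' : ∀ j : Fin 4, f (B (e j) (e 0)) =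
        ((f (e j)).1 * (f (e 0)).1 - (f (e 0)).1 * (f (e j)).1, 0) := by
      intro j; rw [hskew (e j) (e 0), h0]; simp [hf0]; rfl
    have k12 : f (B (e 1) (e 2)) = ((f (e 1)).1 * (f (e 2)).1 - (f (e 2)).1 * (f (e 1)).1, 0) := by
      simp [h12, hf1, hf2, hf3, Prod.ext_iff, comm12]
    have k21 : f (B (e 2) (e 1)) = ((f (e 2)).1 * (f (e 1)).1 - (f (e 1)).1 * (f (e 2)).1, 0) := by
      rw [hskew (e 2) (e 1), h12]
      simp [hf1, hf2, hf3, Prod.ext_iff]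
      rw [← comm12 y]; abel
    have k23 : f (B (e 2) (e 3)) = ((f (e 2)).1 * (f (e 3)).1 - (f (e 3)).1 * (f (e 2)).1, 0) := by
      rw [h23]
      simp [hf0, hf1, hf2, hf3, Prod.ext_iff]
      constructor
      · rw [comm23 y]
      · field_simp; norm_num
    have k32 : f (B (e 3) (e 2)) = ((f (e 3)).1 * (f (e 2)).1 - (f (e 2)).1 * (f (e 3)).1, 0) := by
      rw [hskew (e 3) (e 2), h23]
      simp [hf0, hf1, hf2, hf3, Prod.ext_iff]
      constructor
      · rw [← comm23 y]; abel
      · field_simp; norm_num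
    have k31 : f (B (e 3) (e 1)) = ((f (e 3)).1 * (f (e 1)).1 - (f (e 1)).1 * (f (e 3)).1, 0) := by
      simp [h31, hf1, hf2, hf3, Prod.ext_iff, comm31]
    have k13 : f (B (e 1) (e 3)) = ((f (e 1)).1 * (f (e 3)).1 - (f (e 3)).1 * (f (e 1)).1, 0) := by
      rw [hskew (e 1) (e 3), h31]
      simp [hf1, hf2, hf3, Prod.ext_iff]
      rw [← comm31 y]; abel
    have hmain : B.compr₂ f =
        (((LinearMap.mul ℝ M2 - (LinearMap.mul ℝ M2).flip).comp
          ((LinearMap.fst ℝ M2 ℝ).comp f)).compl₂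
          ((LinearMap.fst ℝ M2 ℝ).comp f)).compr₂ (LinearMap.inl ℝ M2 ℝ) := by
      apply (Pi.basisFun ℝ (Fin 4)).ext; intro i
      apply (Pi.basisFun ℝ (Fin 4)).ext; intro j
      rw [hbe, hbe]
      simp only [LinearMap.compr₂_apply, LinearMap.compl₂_apply, LinearMap.comp_apply,
        LinearMap.inl_apply, LinearMap.sub_apply, LinearMap.mul_apply', LinearMap.flip_apply,
        LinearMap.fst_apply]
      exact match i, j with
        | 0, j => k0 j
        | 1, 0 => k0' 1
        | 1, 1 => kd 1
        | 1, 2 => k12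
        | 1, 3 => k13
        | 2, 0 => k0' 2
        | 2, 1 => k21
        | 2, 2 => kd 2
        | 2, 3 => k23
        | 3, 0 => k0' 3
        | 3, 1 => k31
        | 3, 2 => k32
        | 3, 3 => kd 3
    intro u v
    have h := LinearMap.congr_fun (LinearMap.congr_fun hmain u) v
    simpa only [LinearMap.compr₂_apply, LinearMap.compl₂_apply, LinearMap.comp_apply,
      LinearMap.inl_apply, LinearMap.sub_apply, LinearMap.mul_apply', LinearMap.flip_apply,
      LinearMap.fst_apply] using h
end
end

section
/- Let a₁, a₂ ∈ ℂ be nonzero and b₁, b₂ ∈ ℂ. Then the function y ↦ (1/y)·Arg( (a₁a₂ − y·b₁·conj(b₂)) / (a₁a₂) ), defined for real y ≠ 0 small enough, tends to Im( − b₁·conj(b₂) / (a₁a₂) ) as y → 0 along nonzero real values. (This expresses that Ω_0(g,h) = lim_{y→0} Ω_y(g,h), since for g,h of the form !![aᵢ,bᵢ; −y·conj(bᵢ), conj(aᵢ)] the (1,1) entry of gh equals a₁a₂ − y·b₁·conj(b₂).) -/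
open Complex Filter

noncomputable section

/-- for nonzero `a₁, a₂ ∈ ℂ` and `b₁, b₂ ∈ ℂ`, the function
`y ↦ (1/y)·Arg((a₁a₂ − y·b₁·conj b₂)/(a₁a₂))` tends to `Im(−b₁·conj b₂/(a₁a₂))` as `y → 0`
along nonzero real values; this expresses `Ω_0(g,h) = lim_{y→0} Ω_y(g,h)`. -/
theorem statement14 (a₁ a₂ : ℂ) (ha₁ : a₁ ≠ 0) (ha₂ : a₂ ≠ 0) (b₁ b₂ : ℂ) :
    Tendsto
      (fun y : ℝ =>
        (1 / y) * Complex.arg ((a₁ * a₂ - (y : ℂ) * b₁ * (starRingEnd ℂ) b₂) / (a₁ * a₂)))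
      (nhdsWithin 0 {(0 : ℝ)}ᶜ)
      (nhds ((-(b₁ * (starRingEnd ℂ) b₂) / (a₁ * a₂)).im)) := by
  set c : ℂ := -(b₁ * (starRingEnd ℂ) b₂) / (a₁ * a₂) with hc
  have hA : a₁ * a₂ ≠ 0 := mul_ne_zero ha₁ ha₂
  -- rewrite the quotient as 1 + y • c
  have hq : ∀ y : ℝ, (a₁ * a₂ - (y : ℂ) * b₁ * (starRingEnd ℂ) b₂) / (a₁ * a₂)
      = 1 + (y : ℂ) * c := by
    intro y
    rw [hc]
    field_simp
    ring
  -- derivative of y ↦ log (1 + y c) at 0 is c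
  have hd : HasDerivAt (fun y : ℝ => Complex.log (1 + (y : ℂ) * c)) c 0 := by
    have h1 : HasDerivAt (fun y : ℝ => 1 + (y : ℂ) * c) c 0 := by
      have := ((Complex.ofRealCLM.hasDerivAt (x := (0 : ℝ))).mul_const c).const_add 1
      simpa using this
    have h2 : HasDerivAt Complex.log 1 (1 + (0 : ℝ) * c) := by
      have : HasDerivAt Complex.log (1 : ℂ)⁻¹ 1 :=
        Complex.hasDerivAt_log (by simp [Complex.slitPlane])
      simpa using this
    have := h2.scomp (0 : ℝ) h1
    rw [smul_eq_mul, mul_one] at this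
    exact this
  have hslope := hasDerivAt_iff_tendsto_slope.mp hd
  have him : Tendsto (fun y : ℝ => (slope (fun y : ℝ => Complex.log (1 + (y : ℂ) * c)) 0 y).im)
      (nhdsWithin 0 {(0 : ℝ)}ᶜ) (nhds c.im) :=
    (Complex.continuous_im.tendsto c).comp hslope
  refine him.congr' ?_
  filter_upwards [self_mem_nhdsWithin] with y hy
  have hy' : y ≠ 0 := hy
  rw [hq y]
  simp [slope_def_module, Complex.log_im, Complex.smul_im, one_div]
end
end

section
/- Let y ∈ ℝ, y ≠ 0, and let w ∈ ℂ with w² = y. Then, as s → 0 along positive real values, (1/s)·( φ2(−√s)·φ3(−√s)·φ2(√s)·φ3(√s) − I₂ ) tends to 2y·!![i,0;0,-i] in M₂(ℂ). (This is the group-commutator computation showing [J2,J3] has matrix part 2y·J1.) -/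
open Complex Matrix Filter

noncomputable section

set_option maxHeartbeats 1000000

/-- `φ2(t) = !![cos(wt), w⁻¹ sin(wt); −w sin(wt), cos(wt)]`. -/
def phi2 (w : ℂ) (t : ℝ) : M2 :=
  !![Complex.cos (w * t), w⁻¹ * Complex.sin (w * t);
     -w * Complex.sin (w * t), Complex.cos (w * t)]

/-- `φ3(t) = !![cos(wt), i w⁻¹ sin(wt); i w sin(wt), cos(wt)]`. -/
def phi3 (w : ℂ) (t : ℝ) : M2 :=
  !![Complex.cos (w * t), Complex.I * w⁻¹ * Complex.sin (w * t);
     Complex.I * w * Complex.sin (w * t), Complex.cos (w * t)]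

def Gfun (w : ℂ) (t : ℝ) : M2 :=
  !![ (Complex.sin (w*t)/t)^2 * (2*Complex.cos (w*t)^2 - 2 + 2*Complex.I*Complex.cos (w*t)^2),
      (2*Complex.I*(1+Complex.I)*w⁻¹) * Complex.cos (w*t) * (Complex.sin (w*t)/t)^2 * Complex.sin (w*t);
      2*Complex.I*(1-Complex.I)*w * Complex.cos (w*t) * (Complex.sin (w*t)/t)^2 * Complex.sin (w*t),
      (Complex.sin (w*t)/t)^2 * (2*Complex.cos (w*t)^2 - 2 - 2*Complex.I*Complex.cos (w*t)^2) ]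

lemma key0 (w u c s : ℂ) (hwu : w * u = 1) (hp : s^2 + c^2 = 1) :
    (!![c, u * -s; -w * -s, c] : M2) * !![c, Complex.I * u * -s; Complex.I * w * -s, c]
      * !![c, u * s; -w * s, c] * !![c, Complex.I * u * s; Complex.I * w * s, c] - 1 =
    !![ s^2 * (2*c^2 - 2 + 2*Complex.I*c^2),
        (2*Complex.I*(1+Complex.I)*u) * c * s^3;
        2*Complex.I*(1-Complex.I)*w * c * s^3,
        s^2 * (2*c^2 - 2 - 2*Complex.I*c^2) ] := by
  have hI : Complex.I^2 = -1 := Complex.I_sq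
  ext i j
  fin_cases i <;> fin_cases j <;>
    simp only [Matrix.mul_apply, Fin.sum_univ_two, Matrix.sub_apply, Matrix.one_apply,
      Matrix.cons_val', Matrix.cons_val_zero, Matrix.cons_val_one, Matrix.head_cons,
      Matrix.head_fin_const, Matrix.empty_val', Matrix.cons_val_fin_one, Matrix.head_val',
      Fin.mk_zero, Fin.mk_one, Matrix.of_apply, ne_eq, one_ne_zero, not_false_eq_true,
      if_true, if_false, Fin.zero_eq_one_iff, Fin.one_eq_zero_iff, Nat.succ_ne_self,
      OfNat.ofNat_ne_one, OfNat.one_ne_ofNat, ite_true, ite_false, reduceIte]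
  · linear_combination (c^2 - s^2 + 1)*hp + (s^4 - c^2*s^2)*hI
      + (c^2*s^2*(2*Complex.I - Complex.I^2 + 1) + s^4*Complex.I^2*(w*u+1))*hwu
  · linear_combination (2*c*u*s^3*(Complex.I + Complex.I^2)) * hwu
  · linear_combination (2*w*c*s^3*(Complex.I - Complex.I^2)) * hwu
  · linear_combination (c^2 - s^2 + 1)*hp + (s^4 - c^2*s^2)*hI
      + (c^2*s^2*(-2*Complex.I - Complex.I^2 + 1) + s^4*Complex.I^2*(w*u+1))*hwu

lemma key_s15 (w : ℂ) (hw0 : w ≠ 0) (t : ℝ) (ht : t ≠ 0) :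
    (1 / (t^2)) • (phi2 w (-t) * phi3 w (-t) * phi2 w t * phi3 w t - (1 : M2)) =
    Gfun w t := by
  have ht' : (t:ℂ) ≠ 0 := by exact_mod_cast ht
  set c := Complex.cos (w * t) with hc
  set s := Complex.sin (w * t) with hs
  have h2n : phi2 w (-t) = !![c, w⁻¹ * -s; -w * -s, c] := by
    simp [phi2, Complex.ofReal_neg, mul_neg, Complex.sin_neg, Complex.cos_neg, hc, hs]
  have h3n : phi3 w (-t) = !![c, Complex.I * w⁻¹ * -s; Complex.I * w * -s, c] := by
    simp [phi3, Complex.ofReal_neg, mul_neg, Complex.sin_neg, Complex.cos_neg, hc, hs]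
  have h2 : phi2 w t = !![c, w⁻¹ * s; -w * s, c] := rfl
  have h3 : phi3 w t = !![c, Complex.I * w⁻¹ * s; Complex.I * w * s, c] := rfl
  rw [h2n, h3n, h2, h3,
    key0 w w⁻¹ c s (mul_inv_cancel₀ hw0) (Complex.sin_sq_add_cos_sq _)]
  ext i j
  fin_cases i <;> fin_cases j <;>
    simp only [Gfun, Matrix.smul_apply, Matrix.cons_val', Matrix.cons_val_zero,
      Matrix.cons_val_one, Matrix.head_cons, Matrix.empty_val', Matrix.cons_val_fin_one,
      Matrix.head_val', Fin.mk_zero, Fin.mk_one, Matrix.of_apply, Complex.real_smul,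
      Complex.ofReal_div, Complex.ofReal_one, Complex.ofReal_pow] <;>
    field_simp <;> simp only [hc, hs] <;> ring_nf

lemma tendstoS (w : ℂ) :
    Tendsto (fun t : ℝ => Complex.sin (w * t) / t) (nhdsWithin 0 {x | x ≠ 0}) (nhds w) := by
  have h1 : HasDerivAt (fun z : ℂ => Complex.sin (w * z)) w 0 := by
    simpa [Function.comp_def] using ((Complex.hasDerivAt_sin (w * 0)).comp 0 ((hasDerivAt_id (0:ℂ)).const_mul w))
  have h2 : HasDerivAt (fun t : ℝ => Complex.sin (w * (t:ℂ))) w 0 := by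
    simpa using h1.comp_ofReal (z := 0)
  rw [hasDerivAt_iff_tendsto_slope] at h2
  refine h2.congr fun t => ?_
  simp [slope_def_field, slope, Complex.real_smul, div_eq_mul_inv, mul_comm]

lemma tendsto_M2 {α : Type*} {l : Filter α} {f : α → M2} {L : M2}
    (h : ∀ i j, Tendsto (fun x => f x i j) l (nhds (L i j))) : Tendsto f l (nhds L) := by
  exact tendsto_pi_nhds.2 fun i => tendsto_pi_nhds.2 fun j => h i j

lemma tendstoG (y : ℝ) (w : ℂ) (hw : w ^ 2 = (y : ℂ)) :
    Tendsto (Gfun w) (nhdsWithin 0 {x | x ≠ 0})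
      (nhds ((2 * y) • !![Complex.I, 0; 0, -Complex.I])) := by
  have hS := tendstoS w
  have hC : Tendsto (fun t : ℝ => Complex.cos (w * t)) (nhdsWithin 0 {x | x ≠ 0}) (nhds 1) := by
    have hcont : Continuous fun t : ℝ => Complex.cos (w * t) := by fun_prop
    have : Tendsto (fun t : ℝ => Complex.cos (w * t)) (nhds 0) (nhds 1) := by
      simpa using hcont.tendsto 0
    exact this.mono_left nhdsWithin_le_nhds
  have hs0 : Tendsto (fun t : ℝ => Complex.sin (w * t)) (nhdsWithin 0 {x | x ≠ 0}) (nhds 0) := by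
    have hcont : Continuous fun t : ℝ => Complex.sin (w * t) := by fun_prop
    have : Tendsto (fun t : ℝ => Complex.sin (w * t)) (nhds 0) (nhds 0) := by
      simpa using hcont.tendsto 0
    exact this.mono_left nhdsWithin_le_nhds
  apply tendsto_M2
  intro i j
  fin_cases i <;> fin_cases j <;> simp only [Gfun] <;>
    simp only [Matrix.smul_apply, Matrix.cons_val', Matrix.cons_val_zero,
      Matrix.cons_val_one, Matrix.head_cons, Matrix.empty_val', Matrix.cons_val_fin_one,
      Matrix.head_val', Fin.mk_zero, Fin.mk_one, Matrix.of_apply, smul_zero,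
      Matrix.vecHead, Matrix.vecTail]
  · have h := (hS.pow 2).mul
      ((((hC.pow 2).const_mul 2).sub (tendsto_const_nhds (x := (2:ℂ)))).add ((hC.pow 2).const_mul (2*Complex.I)))
    convert h using 2
    rw [hw, Complex.real_smul]; push_cast; ring
  · have h := (((tendsto_const_nhds (x := 2*Complex.I*(1+Complex.I)*w⁻¹)).mul hC).mul (hS.pow 2)).mul hs0
    convert h using 2
    ring
  · have h := (((tendsto_const_nhds (x := 2*Complex.I*(1-Complex.I)*w)).mul hC).mul (hS.pow 2)).mul hs0
    convert h using 2
    ring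
  · have h := (hS.pow 2).mul
      ((((hC.pow 2).const_mul 2).sub (tendsto_const_nhds (x := (2:ℂ)))).sub ((hC.pow 2).const_mul (2*Complex.I)))
    convert h using 2
    rw [hw, Complex.real_smul]; push_cast; ring

/-- for `y ≠ 0` and `w² = y`, as `s → 0⁺`,
`(1/s)·(φ2(−√s)φ3(−√s)φ2(√s)φ3(√s) − I₂)` tends to `2y·!![i,0;0,−i]`;
this is the group-commutator computation showing `[J2,J3]` has matrix part `2y·J1`. -/
theorem statement15 (y : ℝ) (hy : y ≠ 0) (w : ℂ) (hw : w ^ 2 = (y : ℂ)) :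
    Tendsto
      (fun s : ℝ =>
        (1 / s) • (phi2 w (-Real.sqrt s) * phi3 w (-Real.sqrt s)
          * phi2 w (Real.sqrt s) * phi3 w (Real.sqrt s) - (1 : M2)))
      (nhdsWithin 0 (Set.Ioi (0 : ℝ)))
      (nhds ((2 * y) • !![Complex.I, 0; 0, -Complex.I])) := by
  have hw0 : w ≠ 0 := by
    intro h
    apply hy
    have : (y : ℂ) = 0 := by rw [← hw, h]; ring
    exact_mod_cast this
  have hsqrt : Tendsto Real.sqrt (nhdsWithin 0 (Set.Ioi (0:ℝ)))
      (nhdsWithin 0 {x : ℝ | x ≠ 0}) := by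
    rw [tendsto_nhdsWithin_iff]
    constructor
    · have : Tendsto Real.sqrt (nhds 0) (nhds 0) := by
        simpa using Real.continuous_sqrt.tendsto 0
      exact this.mono_left nhdsWithin_le_nhds
    · filter_upwards [self_mem_nhdsWithin] with s hs
      exact (Real.sqrt_pos.2 hs).ne'
  have hcomp := (tendstoG y w hw).comp hsqrt
  refine hcomp.congr' ?_
  filter_upwards [self_mem_nhdsWithin] with s hs
  have hs0 : s ≠ 0 := (ne_of_gt hs)
  have hsq : Real.sqrt s ^ 2 = s := Real.sq_sqrt hs.le
  have := key_s15 w hw0 (Real.sqrt s) (Real.sqrt_ne_zero'.2 hs)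
  rw [Function.comp_apply, ← this, hsq]
end
end
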